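/- Let a ≥ 0, ε > 0, and |n| ≥ n̄ = 1 + ⌊2/ε⌋ (so ω_n > 0). Then for all t ≥ 0 and every l ∈ ℕ, |d^l H_n/dt^l (t)| ≤ (1/(2ω_n)) [ (2/ε)^l + (a + εn²)^l e^{-t(εn² - 2/ε)} ]. -/

import Mathlib

/-- `h_n = (a + ε n²)/2`. -/
noncomputable def hcoef (a ε : ℝ) (n : ℤ) : ℝ := (a + ε * (n : ℝ) ^ 2) / 2

/-- The real-valued fundamental oscillator solution `H_n(t)`:
`e^{-h t} sinh(ω t)/ω` when `ω² = h² - n² > 0`,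
`e^{-h t} sin(|ω| t)/|ω|` when `h² - n² < 0`, and `t e^{-h t}` when `h² = n²`. -/
noncomputable def Hfun (a ε : ℝ) (n : ℤ) (t : ℝ) : ℝ :=
  if 0 < (hcoef a ε n) ^ 2 - (n : ℝ) ^ 2 then
    Real.exp (-(hcoef a ε n) * t) *
      Real.sinh (Real.sqrt ((hcoef a ε n) ^ 2 - (n : ℝ) ^ 2) * t) /
      Real.sqrt ((hcoef a ε n) ^ 2 - (n : ℝ) ^ 2)
  else if (hcoef a ε n) ^ 2 - (n : ℝ) ^ 2 < 0 then
    Real.exp (-(hcoef a ε n) * t) *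
      Real.sin (Real.sqrt ((n : ℝ) ^ 2 - (hcoef a ε n) ^ 2) * t) /
      Real.sqrt ((n : ℝ) ^ 2 - (hcoef a ε n) ^ 2)
  else Real.exp (-(hcoef a ε n) * t) * t

/-- `n̄ = 1 + ⌊2/ε⌋`. -/
noncomputable def nbar (ε : ℝ) : ℤ := 1 + ⌊(2 : ℝ) / ε⌋

lemma key_iter (b c w : ℝ) (l : ℕ) :
    deriv^[l] (fun t => (Real.exp (b * t) - Real.exp (c * t)) / (2 * w)) =
    fun t => (b ^ l * Real.exp (b * t) - c ^ l * Real.exp (c * t)) / (2 * w) := by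
  induction l with
  | zero => simp
  | succ l ih =>
    rw [Function.iterate_succ_apply', ih]
    funext t
    have hb : HasDerivAt (fun t : ℝ => Real.exp (b * t)) (Real.exp (b * t) * b) t := by
      simpa using ((hasDerivAt_id t).const_mul b).exp
    have hc : HasDerivAt (fun t : ℝ => Real.exp (c * t)) (Real.exp (c * t) * c) t := by
      simpa using ((hasDerivAt_id t).const_mul c).exp
    have := (((hb.const_mul (b ^ l)).sub (hc.const_mul (c ^ l))).div_const (2 * w)).deriv
    simp only [Pi.sub_apply] at this
    rw [this]; ring

theorem stmt12 (a ε : ℝ) (ha : 0 ≤ a) (hε : 0 < ε) (n : ℤ) (hn : nbar ε ≤ |n|)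
    (l : ℕ) (t : ℝ) (ht : 0 ≤ t) :
    |deriv^[l] (Hfun a ε n) t| ≤
      (1 / (2 * Real.sqrt ((hcoef a ε n) ^ 2 - (n : ℝ) ^ 2))) *
        ((2 / ε) ^ l +
          (a + ε * (n : ℝ) ^ 2) ^ l * Real.exp (-t * (ε * (n : ℝ) ^ 2 - 2 / ε))) := by
  set h := hcoef a ε n with hh
  -- basic numeric facts
  have h2e : (0:ℝ) < 2 / ε := by positivity
  have hfl : (0:ℤ) ≤ ⌊(2:ℝ)/ε⌋ := Int.floor_nonneg.2 h2e.le
  have hn1 : (1:ℤ) ≤ |n| := le_trans (by simp [nbar]; omega) hn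
  have hnabs : (2:ℝ)/ε < |(n:ℝ)| := by
    have h1 : ((nbar ε : ℤ) : ℝ) ≤ |(n:ℝ)| := by
      rw [← Int.cast_abs]; exact_mod_cast hn
    have h2 : (2:ℝ)/ε < ((nbar ε : ℤ) : ℝ) := by
      simp only [nbar]
      push_cast
      have := Int.lt_floor_add_one ((2:ℝ)/ε)
      linarith
    linarith
  have hnabs0 : (0:ℝ) < |(n:ℝ)| := lt_trans h2e hnabs
  have hn2 : (n:ℝ)^2 = |(n:ℝ)|^2 := (sq_abs _).symm
  have hεn2 : 2 * |(n:ℝ)| < ε * (n:ℝ)^2 := by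
    have := mul_lt_mul_of_pos_left hnabs hε
    rw [hn2]
    calc 2 * |(n:ℝ)| = (ε * (2/ε)) * |(n:ℝ)| := by field_simp
    _ < (ε * |(n:ℝ)|) * |(n:ℝ)| := by nlinarith
    _ = ε * |(n:ℝ)|^2 := by ring
  have hhpos : |(n:ℝ)| < h := by
    rw [hh, hcoef]; linarith
  have hh0 : 0 < h := lt_trans hnabs0 hhpos
  have hpos : 0 < h ^ 2 - (n:ℝ) ^ 2 := by
    rw [hn2]; nlinarith
  set ω := Real.sqrt (h ^ 2 - (n:ℝ) ^ 2) with hω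
  have hω0 : 0 < ω := Real.sqrt_pos.2 hpos
  have hωsq : ω ^ 2 = h ^ 2 - (n:ℝ) ^ 2 := Real.sq_sqrt hpos.le
  have hωh : ω < h := by
    nlinarith [hn2, hnabs0]
  -- h - ω ≤ 2/ε
  have hkey1 : h - ω ≤ 2 / ε := by
    have hsum : 0 < h + ω := by linarith
    have : (h - ω) * (h + ω) = (n:ℝ)^2 := by nlinarith
    have hge : ε * (n:ℝ)^2 / 2 ≤ h := by rw [hh, hcoef]; linarith
    rw [← sub_nonneg]
    have : 2/ε - (h - ω) = (2 * (h+ω) - ε * (n:ℝ)^2) / (ε * (h+ω)) := by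
      field_simp
      linear_combination (-ε) * this
    rw [this]
    apply div_nonneg _ (by positivity)
    nlinarith
  have hkey2 : ω + h ≤ a + ε * (n:ℝ)^2 := by
    rw [hh, hcoef] at *; linarith
  have hkey3 : ε * (n:ℝ)^2 - 2/ε ≤ ω + h := by
    have : a + ε * (n:ℝ)^2 - 2/ε ≤ ω + h := by
      rw [hh, hcoef] at hkey1 ⊢; linarith
    linarith
  -- closed form for Hfun
  have hHeq : Hfun a ε n = fun s => (Real.exp ((ω - h) * s) - Real.exp ((-(ω + h)) * s)) / (2 * ω) := by
    funext s
    simp only [Hfun, ← hh, if_pos hpos, ← hω, Real.sinh_eq]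
    have e1 : (ω - h) * s = ω * s + (-h * s) := by ring
    have e2 : (-(ω + h)) * s = -(ω * s) + (-h * s) := by ring
    rw [e1, e2, Real.exp_add, Real.exp_add]
    ring
  rw [hHeq, key_iter]
  simp only
  -- now the bound
  have hb := Real.exp_nonneg ((ω - h) * t)
  have hc := Real.exp_nonneg ((-(ω + h)) * t)
  have habs : |(ω - h) ^ l * Real.exp ((ω - h) * t) - (-(ω + h)) ^ l * Real.exp ((-(ω + h)) * t)|
      ≤ (h - ω) ^ l * Real.exp ((ω - h) * t) + (ω + h) ^ l * Real.exp ((-(ω + h)) * t) := by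
    calc _ ≤ |(ω - h) ^ l * Real.exp ((ω - h) * t)| + |(-(ω + h)) ^ l * Real.exp ((-(ω + h)) * t)| :=
        abs_sub _ _
    _ = (h - ω) ^ l * Real.exp ((ω - h) * t) + (ω + h) ^ l * Real.exp ((-(ω + h)) * t) := by
        rw [abs_mul, abs_mul, abs_pow, abs_pow, abs_of_nonneg hb, abs_of_nonneg hc,
          abs_of_nonpos (by linarith : ω - h ≤ 0), abs_neg, abs_of_nonneg (by linarith : 0 ≤ ω + h)]
        ring_nf
  have hbound1 : (h - ω) ^ l * Real.exp ((ω - h) * t) ≤ (2 / ε) ^ l := by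
    calc (h - ω) ^ l * Real.exp ((ω - h) * t) ≤ (2/ε) ^ l * 1 := by
          apply mul_le_mul (pow_le_pow_left₀ (by linarith) hkey1 l) _ hb (by positivity)
          exact Real.exp_le_one_iff.2 (mul_nonpos_of_nonpos_of_nonneg (by linarith) ht)
    _ = (2/ε) ^ l := mul_one _
  have hbound2 : (ω + h) ^ l * Real.exp ((-(ω + h)) * t)
      ≤ (a + ε * (n:ℝ)^2) ^ l * Real.exp (-t * (ε * (n:ℝ)^2 - 2/ε)) := by
    apply mul_le_mul (pow_le_pow_left₀ (by linarith) hkey2 l) _ hc (by positivity)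
    apply Real.exp_le_exp.2
    nlinarith
  rw [abs_div, abs_of_nonneg (by positivity : (0:ℝ) ≤ 2 * ω), div_le_iff₀ (by positivity)]
  calc |(ω - h) ^ l * Real.exp ((ω - h) * t) - (-(ω + h)) ^ l * Real.exp ((-(ω + h)) * t)|
      ≤ (2/ε) ^ l + (a + ε * (n:ℝ)^2) ^ l * Real.exp (-t * (ε * (n:ℝ)^2 - 2/ε)) := by
        linarith [habs, hbound1, hbound2]
  _ = (1 / (2 * ω)) * ((2/ε) ^ l + (a + ε * (n:ℝ)^2) ^ l * Real.exp (-t * (ε * (n:ℝ)^2 - 2/ε))) * (2 * ω) := by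
        field_simp
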